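/- Let Ω ⊆ ℂ be open and let τ, ρ : Ω → ℝ be smooth with ρ > 0, satisfying the Ribaucour equation ρ² + e^{−2τ} ρ Δ₀ρ = 1 + e^{−2τ}(ρ_x² + ρ_y²) on Ω. Set ρ* := 1/ρ, τ* := τ − log ρ, and define m := −(1/2)(e^{−2τ}Δ₀ρ + 2ρ), q := 2 e^{−2τ} Re(ρ_{zz} − 2τ_zρ_z), and analogously m* := −(1/2)(e^{−2τ*}Δ₀ρ* + 2ρ*), q* := 2 e^{−2τ*} Re((ρ*)_{zz} − 2(τ*)_z(ρ*)_z), and likewise q_im := 2e^{−2τ} Im(ρ_{zz} − 2τ_zρ_z), q*_im := 2e^{−2τ*} Im((ρ*)_{zz} − 2(τ*)_z(ρ*)_z). Then m* = m, q* = −q and q*_im = −q_im on Ω; consequently m* + q* = m − q and m* − q* = m + q. (Here m is the mean radius of curvature H/K and m ± q are the principal curvature radii 1/k₁, 1/k₂ along the coordinate directions where these are curvature lines; hence under duality the principal curvatures are switched: k₁ = k₂*, k₂ = k₁*.) -/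

import Mathlib

/-- Partial derivative in the `x`-direction of a function on `ℂ ≅ ℝ²`. -/
noncomputable def pdx (u : ℂ → ℝ) (z : ℂ) : ℝ := fderiv ℝ u z 1

/-- Partial derivative in the `y`-direction of a function on `ℂ ≅ ℝ²`. -/
noncomputable def pdy (u : ℂ → ℝ) (z : ℂ) : ℝ := fderiv ℝ u z Complex.I

/-- Flat Laplacian `Δ₀u = u_xx + u_yy`. -/
noncomputable def lap (u : ℂ → ℝ) (z : ℂ) : ℝ := pdx (pdx u) z + pdy (pdy u) z

/-- Wirtinger derivative `u_z = (u_x - i u_y)/2` of a complex-valued function on `ℂ`. -/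
noncomputable def wdz (u : ℂ → ℂ) (z : ℂ) : ℂ :=
  (fderiv ℝ u z 1 - Complex.I * fderiv ℝ u z Complex.I) / 2

/-- The complexification of a real-valued function on `ℂ`. -/
noncomputable def cof (u : ℂ → ℝ) : ℂ → ℂ := fun z => (u z : ℂ)

open Complex Filter Topology

section helpers

variable {f g p q : ℂ → ℝ} {z v : ℂ}

lemma pd_mul (hf : DifferentiableAt ℝ f z) (hg : DifferentiableAt ℝ g z) (v : ℂ) :
    fderiv ℝ (fun w => f w * g w) z v = fderiv ℝ f z v * g z + f z * fderiv ℝ g z v := by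
  rw [fderiv_fun_mul hf hg]
  simp only [ContinuousLinearMap.add_apply, ContinuousLinearMap.smul_apply, smul_eq_mul]
  ring

lemma pd_inv (hf : DifferentiableAt ℝ f z) (h0 : f z ≠ 0) (v : ℂ) :
    fderiv ℝ (fun w => (f w)⁻¹) z v = -(fderiv ℝ f z v) / f z ^ 2 := by
  have h := ((hasDerivAt_inv h0).comp_hasFDerivAt z hf.hasFDerivAt).fderiv
  rw [show (fun w => (f w)⁻¹) = Inv.inv ∘ f from rfl, h]
  simp only [ContinuousLinearMap.smul_apply, smul_eq_mul]
  ring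

lemma pd_log (hf : DifferentiableAt ℝ f z) (h0 : f z ≠ 0) (v : ℂ) :
    fderiv ℝ (fun w => Real.log (f w)) z v = fderiv ℝ f z v / f z := by
  rw [(hf.hasFDerivAt.log h0).fderiv]
  simp only [ContinuousLinearMap.smul_apply, smul_eq_mul]
  ring

lemma pd_sub (hf : DifferentiableAt ℝ f z) (hg : DifferentiableAt ℝ g z) (v : ℂ) :
    fderiv ℝ (fun w => f w - g w) z v = fderiv ℝ f z v - fderiv ℝ g z v := by
  rw [fderiv_fun_sub hf hg]; simp

lemma pd_neg (v : ℂ) :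
    fderiv ℝ (fun w => -f w) z v = -(fderiv ℝ f z v) := by
  rw [fderiv_fun_neg]; simp

lemma pd_half (hf : DifferentiableAt ℝ f z) (v : ℂ) :
    fderiv ℝ (fun w => f w / 2) z v = fderiv ℝ f z v / 2 := by
  rw [show (fun w => f w / 2) = fun w => f w * (2 : ℝ)⁻¹ from by funext w; ring,
    fderiv_mul_const hf]
  simp only [ContinuousLinearMap.smul_apply, smul_eq_mul]
  ring

lemma contDiffAt_pd {u : ℂ → ℝ} (hu : ContDiffAt ℝ ((⊤ : ℕ∞)) u z) (v : ℂ) :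
    ContDiffAt ℝ ((⊤ : ℕ∞)) (fun w => fderiv ℝ u w v) z :=
  (hu.fderiv_right (m := (⊤ : ℕ∞)) (by exact_mod_cast le_top)).clm_apply contDiffAt_const

lemma hasFD_cof (hf : DifferentiableAt ℝ f z) :
    HasFDerivAt (fun w => ((f w : ℝ) : ℂ)) (Complex.ofRealCLM.comp (fderiv ℝ f z)) z :=
  Complex.ofRealCLM.hasFDerivAt.comp z hf.hasFDerivAt

lemma pd_cof (hf : DifferentiableAt ℝ f z) (v : ℂ) :
    fderiv ℝ (cof f) z v = (fderiv ℝ f z v : ℂ) := by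
  have h : HasFDerivAt (cof f) (Complex.ofRealCLM.comp (fderiv ℝ f z)) z := hasFD_cof hf
  rw [h.fderiv]
  simp

lemma pd_c (hp : DifferentiableAt ℝ p z) (hq : DifferentiableAt ℝ q z) (v : ℂ) :
    fderiv ℝ (fun w => ((p w : ℂ)) - ((q w : ℂ)) * Complex.I) z v
      = ((fderiv ℝ p z v : ℂ)) - ((fderiv ℝ q z v : ℂ)) * Complex.I := by
  have h : HasFDerivAt (fun w => ((p w : ℂ)) - ((q w : ℂ)) * Complex.I)
      ((Complex.ofRealCLM.comp (fderiv ℝ p z))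
        - (Complex.I • (Complex.ofRealCLM.comp (fderiv ℝ q z)))) z :=
    (hasFD_cof hp).sub ((hasFD_cof hq).mul_const Complex.I)
  rw [h.fderiv]
  simp [ContinuousLinearMap.sub_apply, ContinuousLinearMap.smulRight_apply,
    ContinuousLinearMap.comp_apply, smul_eq_mul]
  ring

lemma wdz_cof (hf : DifferentiableAt ℝ f z) :
    wdz (cof f) z = ((fderiv ℝ f z 1 / 2 : ℝ) : ℂ)
      - ((fderiv ℝ f z Complex.I / 2 : ℝ) : ℂ) * Complex.I := by
  rw [show wdz (cof f) z
      = (fderiv ℝ (cof f) z 1 - Complex.I * fderiv ℝ (cof f) z Complex.I) / 2 from rfl,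
    pd_cof hf 1, pd_cof hf Complex.I]
  push_cast
  ring

lemma wdz2_cof {Ω : Set ℂ} (hΩ : IsOpen Ω) {u : ℂ → ℝ} {z : ℂ} (hz : z ∈ Ω)
    (hu : ∀ w ∈ Ω, DifferentiableAt ℝ u w)
    (h1 : DifferentiableAt ℝ (fun w => fderiv ℝ u w 1) z)
    (hI : DifferentiableAt ℝ (fun w => fderiv ℝ u w Complex.I) z) :
    wdz (wdz (cof u)) z =
      (((fderiv ℝ (fun w => fderiv ℝ u w 1) z 1
          - fderiv ℝ (fun w => fderiv ℝ u w Complex.I) z Complex.I) / 4 : ℝ) : ℂ)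
        - (((fderiv ℝ (fun w => fderiv ℝ u w Complex.I) z 1
          + fderiv ℝ (fun w => fderiv ℝ u w 1) z Complex.I) / 4 : ℝ) : ℂ) * Complex.I := by
  have hev : wdz (cof u) =ᶠ[𝓝 z]
      fun w => ((fderiv ℝ u w 1 / 2 : ℝ) : ℂ)
        - ((fderiv ℝ u w Complex.I / 2 : ℝ) : ℂ) * Complex.I := by
    filter_upwards [hΩ.mem_nhds hz] with w hw
    exact wdz_cof (hu w hw)
  have h1' : DifferentiableAt ℝ (fun w => fderiv ℝ u w 1 / 2) z := by
    simpa [div_eq_mul_inv] using h1.mul_const ((2:ℝ)⁻¹)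
  have hI' : DifferentiableAt ℝ (fun w => fderiv ℝ u w Complex.I / 2) z := by
    simpa [div_eq_mul_inv] using hI.mul_const ((2:ℝ)⁻¹)
  rw [show wdz (wdz (cof u)) z
      = (fderiv ℝ (wdz (cof u)) z 1 - Complex.I * fderiv ℝ (wdz (cof u)) z Complex.I) / 2 from
      rfl, hev.fderiv_eq,
    pd_c (p := fun w => fderiv ℝ u w 1 / 2) (q := fun w => fderiv ℝ u w Complex.I / 2)
      h1' hI' 1,
    pd_c (p := fun w => fderiv ℝ u w 1 / 2) (q := fun w => fderiv ℝ u w Complex.I / 2)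
      h1' hI' Complex.I,
    pd_half h1 1, pd_half hI 1, pd_half h1 Complex.I, pd_half hI Complex.I]
  push_cast
  linear_combination ((fderiv ℝ (fun w => fderiv ℝ u w Complex.I) z Complex.I : ℂ) / 4)
    * Complex.I_sq

end helpers

/-- for `ρ > 0` satisfying the Ribaucour equation relative to `τ` on the
open set `Ω`, with dual data `ρ* = 1/ρ`, `τ* = τ - log ρ`, the quantities
`m = -(1/2)(e^{-2τ}Δ₀ρ + 2ρ)`, `q = 2 e^{-2τ} Re(ρ_{zz} - 2τ_zρ_z)`,
`q_im = 2 e^{-2τ} Im(ρ_{zz} - 2τ_zρ_z)` and their dual analogues satisfy `m* = m`,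
`q* = -q`, `q*_im = -q_im`, hence `m* + q* = m - q` and `m* - q* = m + q`: under duality
the principal curvatures are switched. -/
theorem dual_ribaucour_switches_principal_curvatures
    (Ω : Set ℂ) (hΩ : IsOpen Ω) (τ ρ : ℂ → ℝ)
    (hτ : ContDiffOn ℝ (⊤ : ℕ∞) τ Ω) (hρ : ContDiffOn ℝ (⊤ : ℕ∞) ρ Ω)
    (hρpos : ∀ z ∈ Ω, 0 < ρ z)
    (hRibaucour : ∀ z ∈ Ω, ρ z ^ 2 + Real.exp (-(2 * τ z)) * ρ z * lap ρ z
      = 1 + Real.exp (-(2 * τ z)) * (pdx ρ z ^ 2 + pdy ρ z ^ 2))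
    (ρs τs : ℂ → ℝ)
    (hρs : ∀ z ∈ Ω, ρs z = 1 / ρ z)
    (hτs : ∀ z ∈ Ω, τs z = τ z - Real.log (ρ z))
    (m q qim ms qs qsim : ℂ → ℝ)
    (hm : ∀ z ∈ Ω, m z = -(1 / 2) * (Real.exp (-(2 * τ z)) * lap ρ z + 2 * ρ z))
    (hq : ∀ z ∈ Ω, q z = 2 * Real.exp (-(2 * τ z)) *
      (wdz (wdz (cof ρ)) z - 2 * wdz (cof τ) z * wdz (cof ρ) z).re)
    (hqim : ∀ z ∈ Ω, qim z = 2 * Real.exp (-(2 * τ z)) *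
      (wdz (wdz (cof ρ)) z - 2 * wdz (cof τ) z * wdz (cof ρ) z).im)
    (hms : ∀ z ∈ Ω, ms z = -(1 / 2) * (Real.exp (-(2 * τs z)) * lap ρs z + 2 * ρs z))
    (hqs : ∀ z ∈ Ω, qs z = 2 * Real.exp (-(2 * τs z)) *
      (wdz (wdz (cof ρs)) z - 2 * wdz (cof τs) z * wdz (cof ρs) z).re)
    (hqsim : ∀ z ∈ Ω, qsim z = 2 * Real.exp (-(2 * τs z)) *
      (wdz (wdz (cof ρs)) z - 2 * wdz (cof τs) z * wdz (cof ρs) z).im) :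
    ∀ z ∈ Ω, ms z = m z ∧ qs z = -q z ∧ qsim z = -qim z ∧
      ms z + qs z = m z - q z ∧ ms z - qs z = m z + q z := by
  intro z hz
  have hmem : ∀ w ∈ Ω, Ω ∈ 𝓝 w := fun w hw => hΩ.mem_nhds hw
  have hdρ : ∀ w ∈ Ω, DifferentiableAt ℝ ρ w :=
    fun w hw => (hρ.contDiffAt (hmem w hw)).differentiableAt (by simp)
  have hdτ : ∀ w ∈ Ω, DifferentiableAt ℝ τ w :=
    fun w hw => (hτ.contDiffAt (hmem w hw)).differentiableAt (by simp)
  have hρne : ∀ w ∈ Ω, ρ w ≠ 0 := fun w hw => (hρpos w hw).ne'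
  have h0 : ρ z ≠ 0 := hρne z hz
  -- the dual data, eventually
  have hρsev : ∀ w ∈ Ω, ρs =ᶠ[𝓝 w] fun x => (ρ x)⁻¹ := by
    intro w hw
    filter_upwards [hmem w hw] with x hx
    rw [hρs x hx, one_div]
  have hτsev : ∀ w ∈ Ω, τs =ᶠ[𝓝 w] fun x => τ x - Real.log (ρ x) := by
    intro w hw
    filter_upwards [hmem w hw] with x hx
    exact hτs x hx
  -- first derivatives of the dual data
  have hpdρs : ∀ w ∈ Ω, ∀ v, fderiv ℝ ρs w v = -(fderiv ℝ ρ w v) * (ρ w * ρ w)⁻¹ := by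
    intro w hw v
    rw [(hρsev w hw).fderiv_eq, pd_inv (hdρ w hw) (hρne w hw) v]
    rw [pow_two]
    ring
  have hpdτs : ∀ w ∈ Ω, ∀ v, fderiv ℝ τs w v = fderiv ℝ τ w v - fderiv ℝ ρ w v / ρ w := by
    intro w hw v
    rw [(hτsev w hw).fderiv_eq,
      pd_sub (hdτ w hw) ((hdρ w hw).log (hρne w hw)) v, pd_log (hdρ w hw) (hρne w hw) v]
  -- differentiability of the dual data
  have hdρs : ∀ w ∈ Ω, DifferentiableAt ℝ ρs w := fun w hw =>
    ((hdρ w hw).inv (hρne w hw)).congr_of_eventuallyEq (hρsev w hw)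
  have hdτs : ∀ w ∈ Ω, DifferentiableAt ℝ τs w := fun w hw =>
    ((hdτ w hw).sub ((hdρ w hw).log (hρne w hw))).congr_of_eventuallyEq (hτsev w hw)
  -- differentiability of first partials of ρ
  have hdpd : ∀ v : ℂ, DifferentiableAt ℝ (fun x => fderiv ℝ ρ x v) z :=
    fun v => (contDiffAt_pd (hρ.contDiffAt (hmem z hz)) v).differentiableAt (by simp)
  -- eventual formula for first partials of ρs
  have hevρs : ∀ v : ℂ, (fun w => fderiv ℝ ρs w v)
      =ᶠ[𝓝 z] fun w => -(fderiv ℝ ρ w v) * (ρ w * ρ w)⁻¹ := by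
    intro v
    filter_upwards [hmem z hz] with w hw
    exact hpdρs w hw v
  have hdρρ : DifferentiableAt ℝ (fun x => ρ x * ρ x) z := (hdρ z hz).mul (hdρ z hz)
  have hρρne : ρ z * ρ z ≠ 0 := mul_ne_zero h0 h0
  have hdpdρs : ∀ v : ℂ, DifferentiableAt ℝ (fun w => fderiv ℝ ρs w v) z := fun v =>
    (((hdpd v).neg).mul (hdρρ.inv hρρne)).congr_of_eventuallyEq (hevρs v)
  -- second derivatives of ρs
  have h2 : ∀ v v' : ℂ, fderiv ℝ (fun w => fderiv ℝ ρs w v) z v'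
      = -(fderiv ℝ (fun w => fderiv ℝ ρ w v) z v') / ρ z ^ 2
        + 2 * fderiv ℝ ρ z v * fderiv ℝ ρ z v' / ρ z ^ 3 := by
    intro v v'
    rw [(hevρs v).fderiv_eq,
      pd_mul (f := fun x => -(fderiv ℝ ρ x v)) (g := fun x => (ρ x * ρ x)⁻¹)
        ((hdpd v).neg) (hdρρ.inv hρρne) v',
      pd_neg (f := fun x => fderiv ℝ ρ x v) v',
      pd_inv (f := fun x => ρ x * ρ x) hdρρ hρρne v',
      pd_mul (f := ρ) (g := ρ) (hdρ z hz) (hdρ z hz) v']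
    field_simp
    ring
  -- exp relation
  have hRs : Real.exp (-(2 * τs z)) = Real.exp (-(2 * τ z)) * ρ z ^ 2 := by
    rw [hτs z hz, show -(2 * (τ z - Real.log (ρ z)))
        = -(2 * τ z) + (Real.log (ρ z) + Real.log (ρ z)) by ring,
      Real.exp_add, Real.exp_add, Real.exp_log (hρpos z hz)]
    ring
  -- laplacians
  have e_lap_ρ : lap ρ z = fderiv ℝ (fun w => fderiv ℝ ρ w 1) z 1
      + fderiv ℝ (fun w => fderiv ℝ ρ w Complex.I) z Complex.I := rfl
  have e_lap_ρs : lap ρs z = fderiv ℝ (fun w => fderiv ℝ ρs w 1) z 1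
      + fderiv ℝ (fun w => fderiv ℝ ρs w Complex.I) z Complex.I := rfl
  -- Ribaucour in explicit form
  have hrib := hRibaucour z hz
  rw [show pdx ρ z = fderiv ℝ ρ z 1 from rfl, show pdy ρ z = fderiv ℝ ρ z Complex.I from rfl,
    e_lap_ρ] at hrib
  -- m* = m
  have hM : ms z = m z := by
    rw [hms z hz, hm z hz, hρs z hz, hRs, e_lap_ρ, e_lap_ρs, h2 1 1, h2 Complex.I Complex.I]
    field_simp
    linear_combination 2 * hrib
  -- the complex second-order quantities
  have e_w2ρ := wdz2_cof hΩ hz hdρ (hdpd 1) (hdpd Complex.I)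
  have e_w2ρs := wdz2_cof hΩ hz hdρs (hdpdρs 1) (hdpdρs Complex.I)
  have hQ : qs z = -q z := by
    rw [hqs z hz, hq z hz, e_w2ρ, e_w2ρs, wdz_cof (hdτ z hz), wdz_cof (hdρ z hz),
      wdz_cof (hdτs z hz), wdz_cof (hdρs z hz), h2 1 1, h2 Complex.I Complex.I,
      h2 Complex.I 1, h2 1 Complex.I, hpdρs z hz 1, hpdρs z hz Complex.I,
      hpdτs z hz 1, hpdτs z hz Complex.I, hRs]
    simp only [Complex.sub_re, Complex.sub_im, Complex.add_re, Complex.add_im,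
      Complex.mul_re, Complex.mul_im, Complex.ofReal_re, Complex.ofReal_im,
      Complex.I_re, Complex.I_im, Complex.re_ofNat, Complex.im_ofNat,
      mul_zero, zero_mul, mul_one, one_mul, sub_zero, zero_sub, add_zero, zero_add,
      neg_zero, neg_neg]
    field_simp
    ring
  have hQim : qsim z = -qim z := by
    rw [hqsim z hz, hqim z hz, e_w2ρ, e_w2ρs, wdz_cof (hdτ z hz), wdz_cof (hdρ z hz),
      wdz_cof (hdτs z hz), wdz_cof (hdρs z hz), h2 1 1, h2 Complex.I Complex.I,
      h2 Complex.I 1, h2 1 Complex.I, hpdρs z hz 1, hpdρs z hz Complex.I,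
      hpdτs z hz 1, hpdτs z hz Complex.I, hRs]
    simp only [Complex.sub_re, Complex.sub_im, Complex.add_re, Complex.add_im,
      Complex.mul_re, Complex.mul_im, Complex.ofReal_re, Complex.ofReal_im,
      Complex.I_re, Complex.I_im, Complex.re_ofNat, Complex.im_ofNat,
      mul_zero, zero_mul, mul_one, one_mul, sub_zero, zero_sub, add_zero, zero_add,
      neg_zero, neg_neg]
    field_simp
    ring
  exact ⟨hM, hQ, hQim, by linarith, by linarith⟩
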